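/- Let X be an irreducible, aperiodic, stationary first-order Markov chain on the finite alphabet 𝒳, let g: 𝒳 → 𝒴 and Y_n := g(X_n). Among all stationary k-th order Markov chains on 𝒴, the chain Y^(k) with transition matrix Q_{i_1,...,i_k→j} = p_{Y_{k+1}|Y_1^k}(j | i_1,...,i_k) minimizes the Kullback-Leibler divergence rate D̄(Y‖·), and for this choice D̄(Y‖Y^(k)) = H(Y_{k+1} | Y_1^k) − H̄(Y). -/

import Mathlib

open Filter

section MarkovAggregation

variable {𝒳 : Type*} {𝒴 : Type*} [Fintype 𝒳] [DecidableEq 𝒳] [Fintype 𝒴] [DecidableEq 𝒴]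

/-- Shannon entropy of a probability mass function on a finite set. -/
noncomputable def entPMF {α : Type*} [Fintype α] (p : α → ℝ) : ℝ :=
  ∑ a : α, Real.negMulLog (p a)

/-- Marginal of a joint pmf on the first component. -/
noncomputable def margFst {α β : Type*} [Fintype β] (p : α × β → ℝ) : α → ℝ :=
  fun a => ∑ b : β, p (a, b)

/-- Marginal of a joint pmf on the second component. -/
noncomputable def margSnd {α β : Type*} [Fintype α] (p : α × β → ℝ) : β → ℝ :=
  fun b => ∑ a : α, p (a, b)

/-- Conditional Shannon entropy H(A | B) of a joint pmf `p` of the pair (A, B). -/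
noncomputable def condEntPMF {α β : Type*} [Fintype α] [Fintype β] (p : α × β → ℝ) : ℝ :=
  entPMF p - entPMF (margSnd p)

/-- Mutual information I(A ; B) of a joint pmf `p` of the pair (A, B). -/
noncomputable def mutInfPMF {α β : Type*} [Fintype α] [Fintype β] (p : α × β → ℝ) : ℝ :=
  entPMF (margFst p) + entPMF (margSnd p) - entPMF p

/-- Probability that a first-order Markov chain with initial distribution `π` and transition
matrix `P` emits the path (x_0, ..., x_{n-1}). -/
noncomputable def xPath (π : 𝒳 → ℝ) (P : Matrix 𝒳 𝒳 ℝ) (n : ℕ) (x : Fin n → 𝒳) : ℝ :=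
  (if h : 0 < n then π (x ⟨0, h⟩) else 1) *
    ∏ i : Fin n, if h : i.val + 1 < n then P (x i) (x ⟨i.val + 1, h⟩) else 1

/-- Probability that the projection Y_n = g(X_n) emits the path (y_0, ..., y_{n-1}). -/
noncomputable def yPath (π : 𝒳 → ℝ) (P : Matrix 𝒳 𝒳 ℝ) (g : 𝒳 → 𝒴) (n : ℕ)
    (y : Fin n → 𝒴) : ℝ :=
  ∑ x : Fin n → 𝒳, if ∀ i, g (x i) = y i then xPath π P n x else 0

/-- Joint probability of (X_1, (Y_2, ..., Y_{m+1})). -/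
noncomputable def xyPath (π : 𝒳 → ℝ) (P : Matrix 𝒳 𝒳 ℝ) (g : 𝒳 → 𝒴) (m : ℕ)
    (x₀ : 𝒳) (y : Fin m → 𝒴) : ℝ :=
  ∑ x : Fin (m + 1) → 𝒳,
    if x 0 = x₀ ∧ ∀ i : Fin m, g (x i.succ) = y i then xPath π P (m + 1) x else 0

/-- A matrix is primitive iff some power (and all larger powers) of it is entrywise positive;
for a stochastic matrix this is equivalent to being irreducible and aperiodic. -/
def PrimitiveMatrix (P : Matrix 𝒳 𝒳 ℝ) : Prop :=
  ∃ N : ℕ, ∀ n : ℕ, N ≤ n → ∀ i j : 𝒳, 0 < (P ^ n) i j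

/-- A Markov chain with transition matrix `P` is `k`-lumpable w.r.t. `g` iff for every initial
distribution `π` the projected process is a `k`-th order Markov chain whose transition matrix `Q`
does not depend on `π`. -/
def Lumpable (P : Matrix 𝒳 𝒳 ℝ) (g : 𝒳 → 𝒴) (k : ℕ) : Prop :=
  ∃ Q : (Fin k → 𝒴) → 𝒴 → ℝ,
    ∀ π : 𝒳 → ℝ, (∀ x, 0 ≤ π x) → (∑ x, π x = 1) →
      ∀ n : ℕ, ∀ hn : k ≤ n, ∀ y : Fin n → 𝒴, ∀ j : 𝒴,
        yPath π P g (n + 1) (Fin.snoc y j) =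
          yPath π P g n y *
            Q (fun i : Fin k => y ⟨n - k + i.val, by have := i.isLt; omega⟩) j

/-- The lumpability cost Δ_L^{k+1}(X, g) = H(Y_{k+2} | Y_1^{k+1}) - H(Y_{k+2} | Y_2^{k+1}, X_1),
for the stationary chain with invariant distribution `μ` and transition matrix `P`. -/
noncomputable def lumpCost (μ : 𝒳 → ℝ) (P : Matrix 𝒳 𝒳 ℝ) (g : 𝒳 → 𝒴) (k : ℕ) : ℝ :=
  condEntPMF (fun q : 𝒴 × (Fin (k + 1) → 𝒴) => yPath μ P g (k + 2) (Fin.snoc q.2 q.1)) -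
  condEntPMF (fun q : 𝒴 × (𝒳 × (Fin k → 𝒴)) =>
    xyPath μ P g (k + 1) q.2.1 (Fin.snoc q.2.2 q.1))

/-- The predictability cost Δ_P^{k+1}(X, g) = I(X_2 ; X_1) - I(Y_{k+2} ; Y_1^{k+1}),
for the stationary chain with invariant distribution `μ` and transition matrix `P`. -/
noncomputable def predCost (μ : 𝒳 → ℝ) (P : Matrix 𝒳 𝒳 ℝ) (g : 𝒳 → 𝒴) (k : ℕ) : ℝ :=
  mutInfPMF (fun q : 𝒳 × 𝒳 => μ q.1 * P q.1 q.2) -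
  mutInfPMF (fun q : 𝒴 × (Fin (k + 1) → 𝒴) => yPath μ P g (k + 2) (Fin.snoc q.2 q.1))

/-- Path probabilities of a stationary `K`-th order Markov chain on `𝒴` with stationary
`K`-dimensional distribution `ρ` and transition matrix `R`. -/
noncomputable def mkvPath {K : ℕ} (ρ : (Fin K → 𝒴) → ℝ) (R : (Fin K → 𝒴) → 𝒴 → ℝ)
    (n : ℕ) (y : Fin n → 𝒴) : ℝ :=
  if h : K ≤ n then
    ρ (fun i => y ⟨i.val, lt_of_lt_of_le i.isLt h⟩) *
      ∏ m : Fin n, if hm : K ≤ m.val then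
        R (fun i => y ⟨m.val - K + i.val, by have h1 := i.isLt; have h2 := m.isLt; omega⟩) (y m)
      else 1
  else
    ∑ z : Fin K → 𝒴, if ∀ i : Fin n, z ⟨i.val, by have := i.isLt; omega⟩ = y i then ρ z else 0

end MarkovAggregation
set_option linter.unusedSectionVars false

namespace Stmt5Aux

open Finset

variable {𝒳 : Type*} {𝒴 : Type*} [Fintype 𝒳] [DecidableEq 𝒳] [Fintype 𝒴] [DecidableEq 𝒴]

/-- Product of transition probabilities along a path. -/
noncomputable def tProd (P : Matrix 𝒳 𝒳 ℝ) (n : ℕ) (x : Fin n → 𝒳) : ℝ :=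
  ∏ i : Fin n, if h : i.val + 1 < n then P (x i) (x ⟨i.val + 1, h⟩) else 1

lemma xPath_eq (π : 𝒳 → ℝ) (P : Matrix 𝒳 𝒳 ℝ) (n : ℕ) (x : Fin n → 𝒳) :
    xPath π P n x = (if h : 0 < n then π (x ⟨0, h⟩) else 1) * tProd P n x := rfl

lemma tProd_zero (P : Matrix 𝒳 𝒳 ℝ) (x : Fin 0 → 𝒳) : tProd P 0 x = 1 := by
  simp [tProd]

lemma xPath_zero (π : 𝒳 → ℝ) (P : Matrix 𝒳 𝒳 ℝ) (x : Fin 0 → 𝒳) : xPath π P 0 x = 1 := by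
  simp [xPath_eq, tProd_zero]

lemma tProd_cons (P : Matrix 𝒳 𝒳 ℝ) (n : ℕ) (a : 𝒳) (x : Fin n → 𝒳) :
    tProd P (n + 1) (Fin.cons a x) =
      (if h : 0 < n then P a (x ⟨0, h⟩) else 1) * tProd P n x := by
  unfold tProd
  rw [Fin.prod_univ_succ]
  congr 1
  · by_cases h : 0 < n
    · rw [dif_pos (by simp only [Fin.val_zero]; omega : (0:Fin (n+1)).val + 1 < n + 1), dif_pos h]
      have h2 : (⟨(0:Fin (n+1)).val + 1, by simp only [Fin.val_zero]; omega⟩ : Fin (n+1)) =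
          Fin.succ ⟨0, h⟩ := by apply Fin.ext; simp
      rw [h2, Fin.cons_succ, Fin.cons_zero]
    · have hn : n = 0 := by omega
      subst hn
      simp
  · apply Finset.prod_congr rfl
    intro i _
    by_cases h : i.val + 1 < n
    · rw [dif_pos (by simp only [Fin.val_succ]; omega : (Fin.succ i).val + 1 < n + 1), dif_pos h]
      have h2 : (⟨(Fin.succ i).val + 1, by simp only [Fin.val_succ]; omega⟩ : Fin (n+1)) =
          Fin.succ ⟨i.val + 1, h⟩ := by
        apply Fin.ext; simp
      rw [h2, Fin.cons_succ, Fin.cons_succ]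
    · rw [dif_neg (by simp; omega), dif_neg h]

lemma tProd_snoc (P : Matrix 𝒳 𝒳 ℝ) (n : ℕ) (x : Fin n → 𝒳) (a : 𝒳) :
    tProd P (n + 1) (Fin.snoc x a) =
      tProd P n x * (if h : 0 < n then P (x ⟨n - 1, by omega⟩) a else 1) := by
  unfold tProd
  rw [Fin.prod_univ_castSucc]
  rw [dif_neg (by simp)]
  rw [mul_one]
  have key : ∀ i : Fin n,
      (if h : (i.castSucc : Fin (n+1)).val + 1 < n + 1 then
          P (Fin.snoc (α := fun _ => 𝒳) x a i.castSucc) (Fin.snoc (α := fun _ => 𝒳) x a ⟨(i.castSucc : Fin (n+1)).val + 1, h⟩) else 1)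
        = (if h : i.val + 1 < n then P (x i) (x ⟨i.val + 1, h⟩) else 1) *
          (if i.val + 1 = n then P (x i) a else 1) := by
    intro i
    rw [dif_pos (by simp only [Fin.coe_castSucc]; omega : (i.castSucc : Fin (n+1)).val + 1 < n + 1)]
    by_cases h : i.val + 1 < n
    · rw [dif_pos h, if_neg (by omega)]
      have h2 : (⟨(i.castSucc : Fin (n+1)).val + 1, by simp only [Fin.coe_castSucc]; omega⟩ : Fin (n+1)) =
          Fin.castSucc ⟨i.val + 1, h⟩ := by apply Fin.ext; simp
      rw [mul_one, h2, Fin.snoc_castSucc, Fin.snoc_castSucc]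
    · have hn : i.val + 1 = n := by omega
      rw [dif_neg h, if_pos hn, one_mul]
      have h2 : (⟨(i.castSucc : Fin (n+1)).val + 1, by simp only [Fin.coe_castSucc]; omega⟩ : Fin (n+1)) =
          Fin.last n := by apply Fin.ext; simp [hn]
      rw [h2, Fin.snoc_last, Fin.snoc_castSucc]
  rw [Finset.prod_congr rfl (fun i _ => key i), Finset.prod_mul_distrib]
  congr 1
  by_cases h : 0 < n
  · rw [dif_pos h]
    rw [Finset.prod_eq_single (⟨n - 1, by omega⟩ : Fin n)]
    · rw [if_pos (show ((⟨n - 1, by omega⟩ : Fin n)).val + 1 = n by simp only []; omega)]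
    · intro b _ hb
      rw [if_neg]
      intro hc
      exact hb (Fin.ext (show b.val = n - 1 by omega))
    · intro hmem; exact absurd (Finset.mem_univ _) hmem
  · have hn : n = 0 := by omega
    subst hn
    simp


lemma xPath_nonneg (π : 𝒳 → ℝ) (hπ : ∀ x, 0 ≤ π x) (P : Matrix 𝒳 𝒳 ℝ)
    (hP0 : ∀ i j, 0 ≤ P i j) (n : ℕ) (x : Fin n → 𝒳) : 0 ≤ xPath π P n x := by
  rw [xPath_eq]
  apply mul_nonneg
  · by_cases h : 0 < n
    · rw [dif_pos h]; exact hπ _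
    · rw [dif_neg h]; norm_num
  · apply Finset.prod_nonneg
    intro i _
    by_cases h : i.val + 1 < n
    · rw [dif_pos h]; exact hP0 _ _
    · rw [dif_neg h]; norm_num

lemma xPath_cons (π : 𝒳 → ℝ) (P : Matrix 𝒳 𝒳 ℝ) (n : ℕ) (a : 𝒳) (x : Fin n → 𝒳) :
    xPath π P (n + 1) (Fin.cons a x) =
      π a * ((if h : 0 < n then P a (x ⟨0, h⟩) else 1) * tProd P n x) := by
  rw [xPath_eq, tProd_cons, dif_pos (Nat.succ_pos n)]
  congr 1

lemma xPath_snoc (π : 𝒳 → ℝ) (P : Matrix 𝒳 𝒳 ℝ) (n : ℕ) (x : Fin n → 𝒳) (a : 𝒳) :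
    xPath π P (n + 1) (Fin.snoc x a) =
      xPath π P n x * (if h : 0 < n then P (x ⟨n - 1, by omega⟩) a else π a) := by
  rw [xPath_eq, xPath_eq, tProd_snoc]
  by_cases h : 0 < n
  · rw [dif_pos (Nat.succ_pos n), dif_pos h, dif_pos h, dif_pos h]
    have h2 : (⟨0, Nat.succ_pos n⟩ : Fin (n+1)) = Fin.castSucc ⟨0, h⟩ := rfl
    rw [h2, Fin.snoc_castSucc]
    ring
  · have hn : n = 0 := by omega
    subst hn
    rw [dif_pos (Nat.succ_pos 0), dif_neg h, dif_neg h, dif_neg h]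
    have h2 : (⟨0, Nat.succ_pos 0⟩ : Fin 1) = Fin.last 0 := rfl
    rw [h2, Fin.snoc_last, tProd_zero]
    ring

section Sums

variable (μ : 𝒳 → ℝ) (P : Matrix 𝒳 𝒳 ℝ) (g : 𝒳 → 𝒴)

lemma sum_xPath_snoc (hμ1 : ∑ x : 𝒳, μ x = 1) (hP1 : ∀ i, ∑ j : 𝒳, P i j = 1)
    (n : ℕ) (x : Fin n → 𝒳) :
    ∑ a : 𝒳, xPath μ P (n + 1) (Fin.snoc x a) = xPath μ P n x := by
  simp only [xPath_snoc]
  rw [← Finset.mul_sum]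
  by_cases h : 0 < n
  · simp only [dif_pos h, hP1, mul_one]
  · simp only [dif_neg h, hμ1, mul_one]

lemma sum_xPath_cons (hμ1 : ∑ x : 𝒳, μ x = 1) (hμ2 : ∀ j, ∑ i : 𝒳, μ i * P i j = μ j)
    (n : ℕ) (x : Fin n → 𝒳) :
    ∑ a : 𝒳, xPath μ P (n + 1) (Fin.cons a x) = xPath μ P n x := by
  simp only [xPath_cons]
  by_cases h : 0 < n
  · simp only [dif_pos h]
    have : ∀ a : 𝒳, μ a * (P a (x ⟨0, h⟩) * tProd P n x)
        = (μ a * P a (x ⟨0, h⟩)) * tProd P n x := fun a => by ring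
    rw [Finset.sum_congr rfl (fun a _ => this a), ← Finset.sum_mul, hμ2]
    rw [xPath_eq, dif_pos h]
  · have hn : n = 0 := by omega
    subst hn
    simp only [dif_neg h, tProd_zero, mul_one, xPath_zero, hμ1]

lemma sum_fin_snoc {α : Type*} [Fintype α] (n : ℕ) (F : (Fin (n+1) → α) → ℝ) :
    ∑ x : Fin (n+1) → α, F x = ∑ a : α, ∑ x' : Fin n → α, F (Fin.snoc x' a) := by
  have hbij : Function.Bijective (fun q : α × (Fin n → α) => Fin.snoc (α := fun _ => α) q.2 q.1) :=
    (Fin.snocEquiv (fun _ => α)).bijective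
  rw [← Fintype.sum_bijective _ hbij (fun q => F (Fin.snoc q.2 q.1)) F (fun q => rfl)]
  rw [Fintype.sum_prod_type]

lemma sum_fin_cons {α : Type*} [Fintype α] (n : ℕ) (F : (Fin (n+1) → α) → ℝ) :
    ∑ x : Fin (n+1) → α, F x = ∑ a : α, ∑ x' : Fin n → α, F (Fin.cons a x') := by
  have hbij : Function.Bijective (fun q : α × (Fin n → α) => Fin.cons (α := fun _ => α) q.1 q.2) :=
    (Fin.consEquiv (fun _ => α)).bijective
  rw [← Fintype.sum_bijective _ hbij (fun q => F (Fin.cons q.1 q.2)) F (fun q => rfl)]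
  rw [Fintype.sum_prod_type]

lemma yPath_nonneg (hμ0 : ∀ x, 0 ≤ μ x) (hP0 : ∀ i j, 0 ≤ P i j) (n : ℕ) (y : Fin n → 𝒴) :
    0 ≤ yPath μ P g n y := by
  apply Finset.sum_nonneg
  intro x _
  by_cases h : ∀ i, g (x i) = y i
  · rw [if_pos h]; exact xPath_nonneg μ hμ0 P hP0 n x
  · rw [if_neg h]

lemma sum_yPath_snoc (hμ1 : ∑ x : 𝒳, μ x = 1) (hP1 : ∀ i, ∑ j : 𝒳, P i j = 1)
    (n : ℕ) (y : Fin n → 𝒴) :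
    ∑ j : 𝒴, yPath μ P g (n + 1) (Fin.snoc y j) = yPath μ P g n y := by
  unfold yPath
  rw [Finset.sum_comm]
  have step1 : ∀ x : Fin (n+1) → 𝒳,
      (∑ j : 𝒴, if ∀ i, g (x i) = Fin.snoc (α := fun _ => 𝒴) y j i then xPath μ P (n+1) x else 0)
      = if ∀ i : Fin n, g (x i.castSucc) = y i then xPath μ P (n+1) x else 0 := by
    intro x
    have hcond : ∀ j : 𝒴, (∀ i, g (x i) = Fin.snoc (α := fun _ => 𝒴) y j i) ↔
        ((∀ i : Fin n, g (x i.castSucc) = y i) ∧ g (x (Fin.last n)) = j) := by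
      intro j
      rw [Fin.forall_fin_succ']
      simp [Fin.snoc_castSucc, Fin.snoc_last]
    simp only [hcond]
    by_cases hA : ∀ i : Fin n, g (x i.castSucc) = y i
    · simp [hA]
    · simp [hA]
  rw [Finset.sum_congr rfl (fun x _ => step1 x)]
  rw [sum_fin_snoc]
  rw [Finset.sum_comm]
  apply Finset.sum_congr rfl
  intro x' _
  simp only [Fin.snoc_castSucc]
  by_cases hc : ∀ i : Fin n, g (x' i) = y i
  · simp only [if_pos hc]
    exact sum_xPath_snoc μ P hμ1 hP1 n x'
  · simp only [if_neg hc, Finset.sum_const_zero]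

lemma sum_yPath_cons (hμ1 : ∑ x : 𝒳, μ x = 1) (hμ2 : ∀ j, ∑ i : 𝒳, μ i * P i j = μ j)
    (n : ℕ) (y : Fin n → 𝒴) :
    ∑ a : 𝒴, yPath μ P g (n + 1) (Fin.cons a y) = yPath μ P g n y := by
  unfold yPath
  rw [Finset.sum_comm]
  have step1 : ∀ x : Fin (n+1) → 𝒳,
      (∑ a : 𝒴, if ∀ i, g (x i) = Fin.cons (α := fun _ => 𝒴) a y i then xPath μ P (n+1) x else 0)
      = if ∀ i : Fin n, g (x i.succ) = y i then xPath μ P (n+1) x else 0 := by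
    intro x
    have hcond : ∀ a : 𝒴, (∀ i, g (x i) = Fin.cons (α := fun _ => 𝒴) a y i) ↔
        ((∀ i : Fin n, g (x i.succ) = y i) ∧ g (x 0) = a) := by
      intro a
      rw [Fin.forall_fin_succ]
      simp [Fin.cons_zero, Fin.cons_succ, and_comm]
    simp only [hcond]
    by_cases hA : ∀ i : Fin n, g (x i.succ) = y i
    · simp [hA]
    · simp [hA]
  rw [Finset.sum_congr rfl (fun x _ => step1 x)]
  rw [sum_fin_cons]
  rw [Finset.sum_comm]
  apply Finset.sum_congr rfl
  intro x' _
  simp only [Fin.cons_succ]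
  by_cases hc : ∀ i : Fin n, g (x' i) = y i
  · simp only [if_pos hc]
    exact sum_xPath_cons μ P hμ1 hμ2 n x'
  · simp only [if_neg hc, Finset.sum_const_zero]


/-- Window of length `m` starting at position `s`. -/
def win {𝒴 : Type*} {n : ℕ} (s m : ℕ) (h : s + m ≤ n) (y : Fin n → 𝒴) : Fin m → 𝒴 :=
  fun i => y ⟨s + i.val, by have := i.isLt; omega⟩

lemma sum_yPath_win (hμ1 : ∑ x : 𝒳, μ x = 1) (hμ2 : ∀ j, ∑ i : 𝒳, μ i * P i j = μ j)
    (hP1 : ∀ i, ∑ j : 𝒳, P i j = 1) :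
    ∀ (n s m : ℕ) (h : s + m ≤ n) (f : (Fin m → 𝒴) → ℝ),
    ∑ y : Fin n → 𝒴, yPath μ P g n y * f (win s m h y)
      = ∑ w : Fin m → 𝒴, yPath μ P g m w * f w := by
  intro n
  induction n with
  | zero =>
    intro s m h f
    have hs : s = 0 := by omega
    have hm : m = 0 := by omega
    subst hs; subst hm
    apply Finset.sum_congr rfl
    intro y _
    congr 2
    funext i
    exact i.elim0
  | succ n ih =>
    intro s m h f
    by_cases hlt : s + m ≤ n
    · rw [sum_fin_snoc]
      have hwin : ∀ (j : 𝒴) (y' : Fin n → 𝒴), win s m h (Fin.snoc y' j) = win s m hlt y' := by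
        intro j y'
        funext i
        show Fin.snoc (α := fun _ => 𝒴) y' j ⟨s + i.val, _⟩ = y' ⟨s + i.val, _⟩
        have he : (⟨s + i.val, by have := i.isLt; omega⟩ : Fin (n+1)) =
            Fin.castSucc ⟨s + i.val, by have := i.isLt; omega⟩ := rfl
        rw [he, Fin.snoc_castSucc]
      have step : ∀ j : 𝒴, (∑ y' : Fin n → 𝒴,
          yPath μ P g (n+1) (Fin.snoc y' j) * f (win s m h (Fin.snoc y' j)))
          = ∑ y' : Fin n → 𝒴, yPath μ P g (n+1) (Fin.snoc y' j) * f (win s m hlt y') := by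
        intro j
        exact Finset.sum_congr rfl (fun y' _ => by rw [hwin])
      rw [Finset.sum_congr rfl (fun j _ => step j), Finset.sum_comm]
      have step2 : ∀ y' : Fin n → 𝒴,
          (∑ j : 𝒴, yPath μ P g (n+1) (Fin.snoc y' j) * f (win s m hlt y'))
          = yPath μ P g n y' * f (win s m hlt y') := by
        intro y'
        rw [← Finset.sum_mul, sum_yPath_snoc μ P g hμ1 hP1]
      rw [Finset.sum_congr rfl (fun y' _ => step2 y')]
      exact ih s m hlt f
    · cases s with
      | zero =>
        have hm : m = n + 1 := by omega
        subst hm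
        apply Finset.sum_congr rfl
        intro y _
        congr 2
        funext i
        show y ⟨0 + i.val, _⟩ = y i
        congr 1
        exact Fin.ext (by simp)
      | succ s' =>
        have hle : s' + m ≤ n := by omega
        rw [sum_fin_cons]
        have hwin : ∀ (a : 𝒴) (y' : Fin n → 𝒴),
            win (s'+1) m h (Fin.cons a y') = win s' m hle y' := by
          intro a y'
          funext i
          show Fin.cons (α := fun _ => 𝒴) a y' ⟨s' + 1 + i.val, _⟩ = y' ⟨s' + i.val, _⟩
          have he : (⟨s' + 1 + i.val, by have := i.isLt; omega⟩ : Fin (n+1)) =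
              Fin.succ ⟨s' + i.val, by have := i.isLt; omega⟩ := by
            apply Fin.ext; simp [Fin.val_succ]; omega
          rw [he, Fin.cons_succ]
        have step : ∀ a : 𝒴, (∑ y' : Fin n → 𝒴,
            yPath μ P g (n+1) (Fin.cons a y') * f (win (s'+1) m h (Fin.cons a y')))
            = ∑ y' : Fin n → 𝒴, yPath μ P g (n+1) (Fin.cons a y') * f (win s' m hle y') := by
          intro a
          exact Finset.sum_congr rfl (fun y' _ => by rw [hwin])
        rw [Finset.sum_congr rfl (fun a _ => step a), Finset.sum_comm]
        have step2 : ∀ y' : Fin n → 𝒴,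
            (∑ a : 𝒴, yPath μ P g (n+1) (Fin.cons a y') * f (win s' m hle y'))
            = yPath μ P g n y' * f (win s' m hle y') := by
          intro y'
          rw [← Finset.sum_mul, sum_yPath_cons μ P g hμ1 hμ2]
        rw [Finset.sum_congr rfl (fun y' _ => step2 y')]
        exact ih s' m hle f

lemma yPath_win_pos (hμ0 : ∀ x, 0 ≤ μ x) (hP0 : ∀ i j, 0 ≤ P i j)
    (hμ1 : ∑ x : 𝒳, μ x = 1) (hμ2 : ∀ j, ∑ i : 𝒳, μ i * P i j = μ j)
    (hP1 : ∀ i, ∑ j : 𝒳, P i j = 1)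
    (n s m : ℕ) (h : s + m ≤ n) (y : Fin n → 𝒴) (hy : 0 < yPath μ P g n y) :
    0 < yPath μ P g m (win s m h y) := by
  have key := sum_yPath_win μ P g hμ1 hμ2 hP1 n s m h
    (fun w => if w = win s m h y then (1:ℝ) else 0)
  have hR : (∑ w : Fin m → 𝒴, yPath μ P g m w * (if w = win s m h y then (1:ℝ) else 0))
      = yPath μ P g m (win s m h y) := by
    simp only [mul_ite, mul_one, mul_zero, Finset.sum_ite_eq', Finset.mem_univ, if_pos]
  rw [hR] at key
  rw [← key]
  have hle : yPath μ P g n y ≤ ∑ y' : Fin n → 𝒴,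
      yPath μ P g n y' * (if win s m h y' = win s m h y then (1:ℝ) else 0) := by
    have := Finset.single_le_sum
      (f := fun y' : Fin n → 𝒴 => yPath μ P g n y' * (if win s m h y' = win s m h y then (1:ℝ) else 0))
      (fun y' _ => by
        by_cases hc : win s m h y' = win s m h y
        · rw [if_pos hc, mul_one]; exact yPath_nonneg μ P g hμ0 hP0 n y'
        · rw [if_neg hc, mul_zero])
      (Finset.mem_univ y)
    simpa using this
  exact lt_of_lt_of_le hy hle

end Sums

section Mkv

variable (μ : 𝒳 → ℝ) (P : Matrix 𝒳 𝒳 ℝ) (g : 𝒳 → 𝒴)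

lemma mkvPath_self (k : ℕ) (ρ : (Fin (k+1) → 𝒴) → ℝ) (R : (Fin (k+1) → 𝒴) → 𝒴 → ℝ)
    (v : Fin (k+1) → 𝒴) : mkvPath ρ R (k+1) v = ρ v := by
  unfold mkvPath
  rw [dif_pos (le_refl (k+1))]
  have h3 : ∀ m : Fin (k+1), ¬ (k + 1 ≤ m.val) := fun m => by have := m.isLt; omega
  simp [h3]

lemma mkvPath_succ_self (k : ℕ) (ρ : (Fin (k+1) → 𝒴) → ℝ) (R : (Fin (k+1) → 𝒴) → 𝒴 → ℝ)
    (w : Fin (k+2) → 𝒴) :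
    mkvPath ρ R (k+2) w = ρ (Fin.init w) * R (Fin.init w) (w (Fin.last (k+1))) := by
  unfold mkvPath
  rw [dif_pos (by omega : k + 1 ≤ k + 2)]
  rw [Fin.prod_univ_castSucc]
  have h3 : ∀ m : Fin (k+1), ¬ (k + 1 ≤ (m.castSucc : Fin (k+2)).val) :=
    fun m => by simp only [Fin.coe_castSucc]; have := m.isLt; omega
  simp only [h3, dif_neg, not_false_iff, Finset.prod_const_one, one_mul]
  rw [dif_pos (show k + 1 ≤ (Fin.last (k+1)).val by simp [Fin.val_last])]
  congr 1
  congr 1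
  funext i
  show w _ = Fin.init w i
  show w _ = w i.castSucc
  congr 1
  apply Fin.ext
  simp [Fin.val_last]

/-- The `R`-factor at position `m` of a path. -/
noncomputable def rfac {𝒴 : Type*} (k n : ℕ) (R : (Fin (k+1) → 𝒴) → 𝒴 → ℝ) (y : Fin n → 𝒴)
    (m : Fin n) : ℝ :=
  if hm : k + 1 ≤ m.val then
    R (Fin.init (win (m.val - (k+1)) (k+2) (by have := m.isLt; omega) y))
      ((win (m.val - (k+1)) (k+2) (by have := m.isLt; omega) y) (Fin.last (k+1)))
  else 1

/-- The `log R` term at position `m` of a path. -/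
noncomputable def rterm {𝒴 : Type*} (k n : ℕ) (R : (Fin (k+1) → 𝒴) → 𝒴 → ℝ) (y : Fin n → 𝒴)
    (m : Fin n) : ℝ :=
  Real.log (rfac k n R y m)

lemma mkvPath_eq (k n : ℕ) (hn : k + 1 ≤ n) (ρ : (Fin (k+1) → 𝒴) → ℝ)
    (R : (Fin (k+1) → 𝒴) → 𝒴 → ℝ) (y : Fin n → 𝒴) :
    mkvPath ρ R n y = ρ (win 0 (k+1) (by omega) y) * ∏ m : Fin n, rfac k n R y m := by
  unfold rfac
  unfold mkvPath
  rw [dif_pos hn]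
  congr 1
  · congr 1
    funext i
    show y ⟨i.val, _⟩ = win 0 (k+1) (by omega) y i
    show y _ = y ⟨0 + i.val, _⟩
    congr 1
    exact Fin.ext (by simp)
  · apply Finset.prod_congr rfl
    intro m _
    by_cases hm : k + 1 ≤ m.val
    · rw [dif_pos hm, dif_pos hm]
      have e2 : win (m.val - (k+1)) (k+2) (by have := m.isLt; omega) y (Fin.last (k+1)) = y m := by
        show y ⟨m.val - (k+1) + (Fin.last (k+1)).val, _⟩ = y m
        congr 1
        exact Fin.ext_iff.mpr (by simp only [Fin.val_last]; omega)
      rw [e2]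
      rfl
    · rw [dif_neg hm, dif_neg hm]

lemma card_aux (K n : ℕ) (B : ℝ) :
    (∑ m : Fin n, if K ≤ m.val then B else 0) = ((n - K : ℕ) : ℝ) * B := by
  rw [Fin.sum_univ_eq_sum_range (fun i => if K ≤ i then B else 0) n]
  rw [Finset.sum_ite, Finset.sum_const_zero, Finset.sum_const, add_zero]
  have h : (Finset.range n).filter (fun i => K ≤ i) = Finset.Ico K n := by
    ext i
    simp only [Finset.mem_filter, Finset.mem_range, Finset.mem_Ico]
    omega
  rw [h, Nat.card_Ico, nsmul_eq_mul]

lemma kl_decomp (hμ0 : ∀ x, 0 ≤ μ x) (hP0 : ∀ i j, 0 ≤ P i j)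
    (hμ1 : ∑ x : 𝒳, μ x = 1) (hμ2 : ∀ j, ∑ i : 𝒳, μ i * P i j = μ j)
    (hP1 : ∀ i, ∑ j : 𝒳, P i j = 1) (k : ℕ)
    (ρ : (Fin (k+1) → 𝒴) → ℝ) (R : (Fin (k+1) → 𝒴) → 𝒴 → ℝ)
    (hρ : ∀ v : Fin (k+1) → 𝒴, 0 < yPath μ P g (k+1) v → ρ v ≠ 0)
    (hR : ∀ w : Fin (k+2) → 𝒴, 0 < yPath μ P g (k+2) w →
      R (Fin.init w) (w (Fin.last (k+1))) ≠ 0)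
    (n : ℕ) (hn : k + 1 ≤ n) :
    (∑ y : Fin n → 𝒴, yPath μ P g n y * Real.log (yPath μ P g n y / mkvPath ρ R n y))
      = (∑ y : Fin n → 𝒴, yPath μ P g n y * Real.log (yPath μ P g n y))
        - (∑ v : Fin (k+1) → 𝒴, yPath μ P g (k+1) v * Real.log (ρ v))
        - ((n - (k+1) : ℕ) : ℝ) *
          (∑ w : Fin (k+2) → 𝒴, yPath μ P g (k+2) w *
            Real.log (R (Fin.init w) (w (Fin.last (k+1))))) := by
  have hn0 : 0 + (k+1) ≤ n := by omega
  have main : ∀ y : Fin n → 𝒴,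
      yPath μ P g n y * Real.log (yPath μ P g n y / mkvPath ρ R n y)
      = yPath μ P g n y * Real.log (yPath μ P g n y)
        - (yPath μ P g n y * Real.log (ρ (win 0 (k+1) hn0 y))
          + ∑ m : Fin n, yPath μ P g n y * rterm k n R y m) := by
    intro y
    by_cases hy : yPath μ P g n y = 0
    · simp [hy]
    · have hy' : 0 < yPath μ P g n y :=
        lt_of_le_of_ne (yPath_nonneg μ P g hμ0 hP0 n y) (Ne.symm hy)
      have hρ0 : ρ (win 0 (k+1) hn0 y) ≠ 0 :=
        hρ _ (yPath_win_pos μ P g hμ0 hP0 hμ1 hμ2 hP1 n 0 (k+1) hn0 y hy')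
      have hfac : ∀ m : Fin n, rfac k n R y m ≠ 0 := by
        intro m
        unfold rfac
        by_cases hm : k + 1 ≤ m.val
        · rw [dif_pos hm]
          exact hR _ (yPath_win_pos μ P g hμ0 hP0 hμ1 hμ2 hP1 n (m.val-(k+1)) (k+2)
            (by have := m.isLt; omega) y hy')
        · rw [dif_neg hm]; norm_num
      have hprod : (∏ m : Fin n, rfac k n R y m) ≠ 0 :=
        Finset.prod_ne_zero_iff.mpr (fun m _ => hfac m)
      have hmkv : mkvPath ρ R n y ≠ 0 := by
        rw [mkvPath_eq k n hn ρ R y]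
        exact mul_ne_zero hρ0 hprod
      rw [Real.log_div hy hmkv, mkvPath_eq k n hn ρ R y, Real.log_mul hρ0 hprod,
          Real.log_prod (fun m _ => hfac m)]
      unfold rterm
      rw [← Finset.mul_sum]
      ring
  rw [Finset.sum_congr rfl (fun y _ => main y)]
  rw [Finset.sum_sub_distrib, Finset.sum_add_distrib, sub_sub]
  congr 1
  congr 1
  · exact sum_yPath_win μ P g hμ1 hμ2 hP1 n 0 (k+1) hn0 (fun v => Real.log (ρ v))
  · rw [Finset.sum_comm]
    have hm' : ∀ m : Fin n, (∑ y : Fin n → 𝒴, yPath μ P g n y * rterm k n R y m)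
        = if k + 1 ≤ m.val then (∑ w : Fin (k+2) → 𝒴, yPath μ P g (k+2) w *
            Real.log (R (Fin.init w) (w (Fin.last (k+1))))) else 0 := by
      intro m
      by_cases hm : k + 1 ≤ m.val
      · rw [if_pos hm]
        have hwm : (m.val - (k+1)) + (k+2) ≤ n := by have := m.isLt; omega
        have hterm : ∀ y : Fin n → 𝒴, rterm k n R y m =
            (fun w : Fin (k+2) → 𝒴 => Real.log (R (Fin.init w) (w (Fin.last (k+1)))))
              (win (m.val - (k+1)) (k+2) hwm y) := by
          intro y
          unfold rterm rfac
          rw [dif_pos hm]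
        rw [Finset.sum_congr rfl (fun y _ => by rw [hterm y])]
        exact sum_yPath_win μ P g hμ1 hμ2 hP1 n (m.val-(k+1)) (k+2) hwm
          (fun w => Real.log (R (Fin.init w) (w (Fin.last (k+1)))))
      · have hterm : ∀ y : Fin n → 𝒴, rterm k n R y m = 0 := by
          intro y
          unfold rterm rfac
          rw [dif_neg hm, Real.log_one]
        simp [hterm, hm]
    rw [Finset.sum_congr rfl (fun m _ => hm' m)]
    exact card_aux (k+1) n _

lemma sum_mul_log_eq_neg_ent {α : Type*} [Fintype α] (p : α → ℝ) :
    (∑ a : α, p a * Real.log (p a)) = - entPMF p := by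
  simp only [entPMF, Real.negMulLog, neg_mul, Finset.sum_neg_distrib, neg_neg]

lemma ent_over_n (hbar : ℝ)
    (hrate : Filter.Tendsto (fun n => entPMF (yPath μ P g (n + 1)) - entPMF (yPath μ P g n))
      Filter.atTop (nhds hbar)) :
    Filter.Tendsto (fun n : ℕ => (n:ℝ)⁻¹ * entPMF (yPath μ P g n)) Filter.atTop (nhds hbar) := by
  have h0 : ∀ n : ℕ, entPMF (yPath μ P g n) = entPMF (yPath μ P g 0) +
      ∑ i ∈ Finset.range n, (entPMF (yPath μ P g (i+1)) - entPMF (yPath μ P g i)) := by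
    intro n
    rw [Finset.sum_range_sub (fun i => entPMF (yPath μ P g i)) n]
    ring
  have hc := hrate.cesaro
  have h1 : Filter.Tendsto (fun n : ℕ => (n:ℝ)⁻¹ * entPMF (yPath μ P g 0))
      Filter.atTop (nhds 0) := by
    simpa using (tendsto_inv_atTop_nhds_zero_nat (𝕜 := ℝ)).mul_const (entPMF (yPath μ P g 0))
  have h2 := h1.add hc
  rw [zero_add] at h2
  apply h2.congr
  intro n
  rw [h0 n, mul_add]

lemma kl_tendsto (hμ0 : ∀ x, 0 ≤ μ x) (hP0 : ∀ i j, 0 ≤ P i j)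
    (hμ1 : ∑ x : 𝒳, μ x = 1) (hμ2 : ∀ j, ∑ i : 𝒳, μ i * P i j = μ j)
    (hP1 : ∀ i, ∑ j : 𝒳, P i j = 1) (hbar : ℝ)
    (hrate : Filter.Tendsto (fun n => entPMF (yPath μ P g (n + 1)) - entPMF (yPath μ P g n))
      Filter.atTop (nhds hbar))
    (k : ℕ) (ρ : (Fin (k+1) → 𝒴) → ℝ) (R : (Fin (k+1) → 𝒴) → 𝒴 → ℝ)
    (hρ : ∀ v : Fin (k+1) → 𝒴, 0 < yPath μ P g (k+1) v → ρ v ≠ 0)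
    (hR : ∀ w : Fin (k+2) → 𝒴, 0 < yPath μ P g (k+2) w →
      R (Fin.init w) (w (Fin.last (k+1))) ≠ 0) :
    Filter.Tendsto (fun n : ℕ => (n:ℝ)⁻¹ * ∑ y : Fin n → 𝒴,
        yPath μ P g n y * Real.log (yPath μ P g n y / mkvPath ρ R n y)) Filter.atTop
      (nhds (-hbar - (∑ w : Fin (k+2) → 𝒴, yPath μ P g (k+2) w *
        Real.log (R (Fin.init w) (w (Fin.last (k+1))))))) := by
  set A : ℝ := ∑ v : Fin (k+1) → 𝒴, yPath μ P g (k+1) v * Real.log (ρ v) with hA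
  set B : ℝ := ∑ w : Fin (k+2) → 𝒴, yPath μ P g (k+2) w *
    Real.log (R (Fin.init w) (w (Fin.last (k+1)))) with hB
  have hHn := ent_over_n μ P g hbar hrate
  have hAlim : Filter.Tendsto (fun n : ℕ => (n:ℝ)⁻¹ * A) Filter.atTop (nhds 0) := by
    simpa using (tendsto_inv_atTop_nhds_zero_nat (𝕜 := ℝ)).mul_const A
  have hsub : Filter.Tendsto (fun n : ℕ => (n:ℝ)⁻¹ * ((n - (k+1) : ℕ) : ℝ))
      Filter.atTop (nhds 1) := by
    have h1 : Filter.Tendsto (fun n : ℕ => 1 - (n:ℝ)⁻¹ * ((k:ℝ)+1)) Filter.atTop (nhds 1) := by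
      have h2 : Filter.Tendsto (fun n : ℕ => (n:ℝ)⁻¹ * ((k:ℝ)+1)) Filter.atTop (nhds 0) := by
        simpa using (tendsto_inv_atTop_nhds_zero_nat (𝕜 := ℝ)).mul_const ((k:ℝ)+1)
      simpa using (tendsto_const_nhds (x := (1:ℝ))).sub h2
    apply Filter.Tendsto.congr' _ h1
    filter_upwards [Filter.eventually_ge_atTop (k+1)] with n hn
    have hn0 : (0:ℝ) < (n:ℝ) := by
      have : 0 < n := by omega
      exact_mod_cast this
    rw [Nat.cast_sub hn]
    push_cast
    field_simp
  have hF : Filter.Tendsto (fun n : ℕ =>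
      -((n:ℝ)⁻¹ * entPMF (yPath μ P g n)) - (n:ℝ)⁻¹ * A
        - ((n:ℝ)⁻¹ * ((n - (k+1) : ℕ) : ℝ)) * B) Filter.atTop (nhds (-hbar - 0 - 1 * B)) :=
    (hHn.neg.sub hAlim).sub (hsub.mul_const B)
  have hval : -hbar - 0 - 1 * B = -hbar - B := by ring
  rw [hval] at hF
  apply Filter.Tendsto.congr' _ hF
  filter_upwards [Filter.eventually_ge_atTop (k+1)] with n hn
  rw [kl_decomp μ P g hμ0 hP0 hμ1 hμ2 hP1 k ρ R hρ hR n hn]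
  rw [sum_mul_log_eq_neg_ent]
  ring

lemma init_marg_pos (hμ0 : ∀ x, 0 ≤ μ x) (hP0 : ∀ i j, 0 ≤ P i j)
    (hμ1 : ∑ x : 𝒳, μ x = 1) (hP1 : ∀ i, ∑ j : 𝒳, P i j = 1) (k : ℕ)
    (w : Fin (k+2) → 𝒴) (hw : 0 < yPath μ P g (k+2) w) :
    0 < yPath μ P g (k+1) (Fin.init w) := by
  rw [← sum_yPath_snoc μ P g hμ1 hP1 (k+1) (Fin.init w)]
  have hterm : yPath μ P g (k+2) (Fin.snoc (Fin.init w) (w (Fin.last (k+1))))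
      = yPath μ P g (k+2) w := by rw [Fin.snoc_init_self]
  calc (0:ℝ) < yPath μ P g (k+2) w := hw
    _ = yPath μ P g (k+2) (Fin.snoc (Fin.init w) (w (Fin.last (k+1)))) := hterm.symm
    _ ≤ ∑ j : 𝒴, yPath μ P g (k+2) (Fin.snoc (Fin.init w) j) :=
        Finset.single_le_sum (fun j _ => yPath_nonneg μ P g hμ0 hP0 (k+2) _)
          (Finset.mem_univ (w (Fin.last (k+1))))

lemma bq_eq (hμ0 : ∀ x, 0 ≤ μ x) (hP0 : ∀ i j, 0 ≤ P i j)
    (hμ1 : ∑ x : 𝒳, μ x = 1) (hμ2 : ∀ j, ∑ i : 𝒳, μ i * P i j = μ j)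
    (hP1 : ∀ i, ∑ j : 𝒳, P i j = 1) (k : ℕ) :
    (∑ w : Fin (k+2) → 𝒴, yPath μ P g (k+2) w *
      Real.log (yPath μ P g (k+2) w / yPath μ P g (k+1) (Fin.init w)))
    = - condEntPMF (fun q : 𝒴 × (Fin (k+1) → 𝒴) => yPath μ P g (k+2) (Fin.snoc q.2 q.1)) := by
  have hterm : ∀ w : Fin (k+2) → 𝒴,
      yPath μ P g (k+2) w * Real.log (yPath μ P g (k+2) w / yPath μ P g (k+1) (Fin.init w))
      = yPath μ P g (k+2) w * Real.log (yPath μ P g (k+2) w)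
        - yPath μ P g (k+2) w * Real.log (yPath μ P g (k+1) (Fin.init w)) := by
    intro w
    by_cases hw : yPath μ P g (k+2) w = 0
    · simp [hw]
    · have hw' : 0 < yPath μ P g (k+2) w :=
        lt_of_le_of_ne (yPath_nonneg μ P g hμ0 hP0 (k+2) w) (Ne.symm hw)
      have hc : yPath μ P g (k+1) (Fin.init w) ≠ 0 :=
        ne_of_gt (init_marg_pos μ P g hμ0 hP0 hμ1 hP1 k w hw')
      rw [Real.log_div hw hc]
      ring
  rw [Finset.sum_congr rfl (fun w _ => hterm w), Finset.sum_sub_distrib]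
  have h2 : (∑ w : Fin (k+2) → 𝒴, yPath μ P g (k+2) w *
      Real.log (yPath μ P g (k+1) (Fin.init w)))
      = ∑ v : Fin (k+1) → 𝒴, yPath μ P g (k+1) v * Real.log (yPath μ P g (k+1) v) := by
    have hwin : ∀ w : Fin (k+2) → 𝒴, Fin.init w = win 0 (k+1) (by omega : 0+(k+1) ≤ k+2) w := by
      intro w
      funext i
      show w i.castSucc = w ⟨0 + i.val, _⟩
      congr 1
      exact Fin.ext (by simp)
    simp only [hwin]
    exact sum_yPath_win μ P g hμ1 hμ2 hP1 (k+2) 0 (k+1) (by omega)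
      (fun v => Real.log (yPath μ P g (k+1) v))
  rw [h2]
  unfold condEntPMF
  have h3 : entPMF (fun q : 𝒴 × (Fin (k+1) → 𝒴) => yPath μ P g (k+2) (Fin.snoc q.2 q.1))
      = entPMF (yPath μ P g (k+2)) := by
    unfold entPMF
    rw [Fintype.sum_prod_type]
    exact (sum_fin_snoc (k+1) (fun x => Real.negMulLog (yPath μ P g (k+2) x))).symm
  have h4 : entPMF (margSnd (fun q : 𝒴 × (Fin (k+1) → 𝒴) =>
      yPath μ P g (k+2) (Fin.snoc q.2 q.1))) = entPMF (yPath μ P g (k+1)) := by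
    unfold entPMF margSnd
    apply Finset.sum_congr rfl
    intro v _
    congr 1
    exact sum_yPath_snoc μ P g hμ1 hP1 (k+1) v
  rw [h3, h4, sum_mul_log_eq_neg_ent, sum_mul_log_eq_neg_ent]
  ring

lemma gibbs (hμ0 : ∀ x, 0 ≤ μ x) (hP0 : ∀ i j, 0 ≤ P i j)
    (hμ1 : ∑ x : 𝒳, μ x = 1) (hP1 : ∀ i, ∑ j : 𝒳, P i j = 1) (k : ℕ)
    (R : (Fin (k+1) → 𝒴) → 𝒴 → ℝ) (hR0 : ∀ v j, 0 ≤ R v j) (hR1 : ∀ v, ∑ j : 𝒴, R v j = 1)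
    (hRne : ∀ w : Fin (k+2) → 𝒴, 0 < yPath μ P g (k+2) w →
      R (Fin.init w) (w (Fin.last (k+1))) ≠ 0) :
    (∑ w : Fin (k+2) → 𝒴, yPath μ P g (k+2) w *
      Real.log (R (Fin.init w) (w (Fin.last (k+1)))))
    ≤ ∑ w : Fin (k+2) → 𝒴, yPath μ P g (k+2) w *
      Real.log (yPath μ P g (k+2) w / yPath μ P g (k+1) (Fin.init w)) := by
  rw [← sub_nonneg, ← Finset.sum_sub_distrib]
  rw [sum_fin_snoc (k+1) (fun w : Fin (k+2) → 𝒴 =>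
    yPath μ P g (k+2) w * Real.log (yPath μ P g (k+2) w / yPath μ P g (k+1) (Fin.init w))
    - yPath μ P g (k+2) w * Real.log (R (Fin.init w) (w (Fin.last (k+1)))))]
  rw [Finset.sum_comm]
  apply Finset.sum_nonneg
  intro v _
  simp only [Fin.init_snoc, Fin.snoc_last]
  set c : ℝ := yPath μ P g (k+1) v with hc
  have hcsum : (∑ j : 𝒴, yPath μ P g (k+2) (Fin.snoc v j)) = c :=
    sum_yPath_snoc μ P g hμ1 hP1 (k+1) v
  have hc0 : 0 ≤ c := yPath_nonneg μ P g hμ0 hP0 (k+1) v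
  have key : ∀ j : 𝒴, yPath μ P g (k+2) (Fin.snoc v j) - c * R v j
      ≤ yPath μ P g (k+2) (Fin.snoc v j) * Real.log (yPath μ P g (k+2) (Fin.snoc v j) / c)
        - yPath μ P g (k+2) (Fin.snoc v j) * Real.log (R v j) := by
    intro j
    set a : ℝ := yPath μ P g (k+2) (Fin.snoc v j) with ha
    by_cases haz : a = 0
    · rw [haz]
      simp only [zero_mul, sub_zero, zero_sub, sub_zero]
      have : 0 ≤ c * R v j := mul_nonneg hc0 (hR0 v j)
      linarith
    · have ha' : 0 < a := lt_of_le_of_ne (yPath_nonneg μ P g hμ0 hP0 (k+2) _) (Ne.symm haz)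
      have hcpos : 0 < c := by
        rw [← hcsum]
        calc (0:ℝ) < a := ha'
          _ ≤ ∑ j' : 𝒴, yPath μ P g (k+2) (Fin.snoc v j') :=
            Finset.single_le_sum (fun j' _ => yPath_nonneg μ P g hμ0 hP0 (k+2) _)
              (Finset.mem_univ j)
      have hRj : 0 < R v j := by
        have hne := hRne (Fin.snoc v j) (by exact ha')
        rw [Fin.init_snoc, Fin.snoc_last] at hne
        exact lt_of_le_of_ne (hR0 v j) (Ne.symm hne)
      have hlog : Real.log (c * R v j / a) ≤ c * R v j / a - 1 :=
        Real.log_le_sub_one_of_pos (by positivity)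
      have hrw : Real.log (a / c) - Real.log (R v j) = - Real.log (c * R v j / a) := by
        rw [Real.log_div (ne_of_gt ha') (ne_of_gt hcpos),
            Real.log_div (by positivity) (ne_of_gt ha'),
            Real.log_mul (ne_of_gt hcpos) (ne_of_gt hRj)]
        ring
      have hmul := mul_le_mul_of_nonneg_left hlog (le_of_lt ha')
      have hval : a * (c * R v j / a - 1) = c * R v j - a := by
        field_simp
      rw [hval] at hmul
      have : a * Real.log (a / c) - a * Real.log (R v j)
          = a * (Real.log (a / c) - Real.log (R v j)) := by ring
      rw [this, hrw]
      linarith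
  calc (0:ℝ) = (∑ j : 𝒴, yPath μ P g (k+2) (Fin.snoc v j)) - c * (∑ j : 𝒴, R v j) := by
        rw [hcsum, hR1 v]; ring
    _ = ∑ j : 𝒴, (yPath μ P g (k+2) (Fin.snoc v j) - c * R v j) := by
        rw [Finset.sum_sub_distrib, Finset.mul_sum]
    _ ≤ _ := Finset.sum_le_sum (fun j _ => key j)

end Mkv

end Stmt5Aux

/-- among all stationary `(k+1)`-th order Markov chains on 𝒴, the chain with
transition matrix Q_{i_1..i_{k+1}→j} = p_{Y_{k+2}|Y_1^{k+1}}(j | i_1..i_{k+1}) minimizes the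
Kullback-Leibler divergence rate D̄(Y‖·) from the projection Y of X, and for this choice
D̄(Y‖Y^{(k+1)}) = H(Y_{k+2} | Y_1^{k+1}) − H̄(Y).  (Orders are written as `k+1` ≥ 1.) -/
theorem stmt5 {𝒳 𝒴 : Type*} [Fintype 𝒳] [DecidableEq 𝒳] [Fintype 𝒴] [DecidableEq 𝒴]
    (P : Matrix 𝒳 𝒳 ℝ) (hP0 : ∀ i j, 0 ≤ P i j) (hP1 : ∀ i, ∑ j : 𝒳, P i j = 1)
    (hprim : PrimitiveMatrix P)
    (μ : 𝒳 → ℝ) (hμ0 : ∀ x, 0 ≤ μ x) (hμ1 : ∑ x : 𝒳, μ x = 1)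
    (hμ2 : ∀ j, ∑ i : 𝒳, μ i * P i j = μ j)
    (g : 𝒳 → 𝒴) (k : ℕ) (hbar : ℝ)
    (hrate : Tendsto (fun n => entPMF (yPath μ P g (n + 1)) - entPMF (yPath μ P g n))
      atTop (nhds hbar)) :
    -- the optimal approximation achieves D̄(Y‖Y^{(k+1)}) = H(Y_{k+2}|Y_1^{k+1}) − H̄(Y):
    Tendsto (fun n : ℕ => (n : ℝ)⁻¹ *
        ∑ y : Fin n → 𝒴, yPath μ P g n y *
          Real.log (yPath μ P g n y /
            mkvPath (yPath μ P g (k + 1))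
              (fun v j => yPath μ P g (k + 2) (Fin.snoc v j) / yPath μ P g (k + 1) v) n y))
      atTop
      (nhds (condEntPMF
          (fun q : 𝒴 × (Fin (k + 1) → 𝒴) => yPath μ P g (k + 2) (Fin.snoc q.2 q.1)) - hbar)) ∧
    -- and it is optimal: any other stationary (k+1)-th order Markov chain (ρ, R) on 𝒴 whose
    -- KL divergence rate from Y exists has a larger divergence rate:
    (∀ (ρ : (Fin (k + 1) → 𝒴) → ℝ) (R : (Fin (k + 1) → 𝒴) → 𝒴 → ℝ),
      (∀ v, 0 ≤ ρ v) → (∑ v : Fin (k + 1) → 𝒴, ρ v = 1) →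
      (∀ v j, 0 ≤ R v j) → (∀ v, ∑ j : 𝒴, R v j = 1) →
      (∀ w : Fin (k + 1) → 𝒴,
        ρ w = ∑ a : 𝒴, ρ (Fin.cons a (Fin.init w)) * R (Fin.cons a (Fin.init w)) (w (Fin.last k))) →
      (∀ n : ℕ, ∀ y : Fin n → 𝒴, mkvPath ρ R n y = 0 → yPath μ P g n y = 0) →
      ∀ d : ℝ,
        Tendsto (fun n : ℕ => (n : ℝ)⁻¹ * ∑ y : Fin n → 𝒴,
            yPath μ P g n y * Real.log (yPath μ P g n y / mkvPath ρ R n y)) atTop (nhds d) →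
        condEntPMF
            (fun q : 𝒴 × (Fin (k + 1) → 𝒴) => yPath μ P g (k + 2) (Fin.snoc q.2 q.1)) - hbar
          ≤ d) := by
  have hQten : Filter.Tendsto (fun n : ℕ => (n : ℝ)⁻¹ *
      ∑ y : Fin n → 𝒴, yPath μ P g n y *
        Real.log (yPath μ P g n y /
          mkvPath (yPath μ P g (k + 1))
            (fun v j => yPath μ P g (k + 2) (Fin.snoc v j) / yPath μ P g (k + 1) v) n y))
      Filter.atTop
      (nhds (condEntPMF
        (fun q : 𝒴 × (Fin (k + 1) → 𝒴) => yPath μ P g (k + 2) (Fin.snoc q.2 q.1)) - hbar)) := by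
    have hρQ : ∀ v : Fin (k+1) → 𝒴, 0 < yPath μ P g (k+1) v → yPath μ P g (k+1) v ≠ 0 :=
      fun v hv => ne_of_gt hv
    have hRQ : ∀ w : Fin (k+2) → 𝒴, 0 < yPath μ P g (k+2) w →
        (fun v j => yPath μ P g (k+2) (Fin.snoc v j) / yPath μ P g (k+1) v)
          (Fin.init w) (w (Fin.last (k+1))) ≠ 0 := by
      intro w hw
      simp only [Fin.snoc_init_self]
      exact div_ne_zero (ne_of_gt hw)
        (ne_of_gt (Stmt5Aux.init_marg_pos μ P g hμ0 hP0 hμ1 hP1 k w hw))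
    have h := Stmt5Aux.kl_tendsto μ P g hμ0 hP0 hμ1 hμ2 hP1 hbar hrate k
      (yPath μ P g (k+1))
      (fun v j => yPath μ P g (k+2) (Fin.snoc v j) / yPath μ P g (k+1) v) hρQ hRQ
    simp only [Fin.snoc_init_self] at h
    rw [Stmt5Aux.bq_eq μ P g hμ0 hP0 hμ1 hμ2 hP1 k] at h
    have hval : -hbar - -condEntPMF
        (fun q : 𝒴 × (Fin (k + 1) → 𝒴) => yPath μ P g (k + 2) (Fin.snoc q.2 q.1))
        = condEntPMF
          (fun q : 𝒴 × (Fin (k + 1) → 𝒴) => yPath μ P g (k + 2) (Fin.snoc q.2 q.1)) - hbar := by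
      ring
    rw [hval] at h
    exact h
  constructor
  · exact hQten
  · intro ρ R hρ0 hρ1 hR0 hR1 hstat habs d hd
    have hρ : ∀ v : Fin (k+1) → 𝒴, 0 < yPath μ P g (k+1) v → ρ v ≠ 0 := by
      intro v hv h0
      have h1 := habs (k+1) v (by rw [Stmt5Aux.mkvPath_self]; exact h0)
      exact absurd h1 (ne_of_gt hv)
    have hR : ∀ w : Fin (k+2) → 𝒴, 0 < yPath μ P g (k+2) w →
        R (Fin.init w) (w (Fin.last (k+1))) ≠ 0 := by
      intro w hw h0
      have h1 := habs (k+2) w (by rw [Stmt5Aux.mkvPath_succ_self, h0, mul_zero])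
      exact absurd h1 (ne_of_gt hw)
    have h2 := Stmt5Aux.kl_tendsto μ P g hμ0 hP0 hμ1 hμ2 hP1 hbar hrate k ρ R hρ hR
    have hd' : d = -hbar - (∑ w : Fin (k+2) → 𝒴, yPath μ P g (k+2) w *
        Real.log (R (Fin.init w) (w (Fin.last (k+1))))) := tendsto_nhds_unique hd h2
    have hg := Stmt5Aux.gibbs μ P g hμ0 hP0 hμ1 hP1 k R hR0 hR1 hR
    have hb := Stmt5Aux.bq_eq μ P g hμ0 hP0 hμ1 hμ2 hP1 k
    rw [hd']
    linarith [hg, hb]
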